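/- arXiv:2005.02256 — 2 statements merged into one kernel-verified Lean document; each statement's English description precedes it below -/
import Mathlib

section
/- Let E, F, G be Hilbert spaces, f : E → G and g : F → G bounded linear operators. If there exists c > 0 such that ‖f* x‖ ≤ c·‖g* x‖ for all x in G, then the range of f is contained in the range of g. -/
open ContinuousLinearMap


/-- Douglas-type lemma (one direction): if ‖f* x‖ ≤ c‖g* x‖ for all x then
Im f ⊆ Im g. -/
theorem stmt_0
    {E F G : Type*}
    [NormedAddCommGroup E] [InnerProductSpace ℝ E] [CompleteSpace E]
    [NormedAddCommGroup F] [InnerProductSpace ℝ F] [CompleteSpace F]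
    [NormedAddCommGroup G] [InnerProductSpace ℝ G] [CompleteSpace G]
    (f : E →L[ℝ] G) (g : F →L[ℝ] G)
    (h : ∃ c > (0 : ℝ), ∀ x : G,
      ‖ContinuousLinearMap.adjoint f x‖ ≤ c * ‖ContinuousLinearMap.adjoint g x‖) :
    Set.range f ⊆ Set.range g := by
  obtain ⟨c, hc, hle⟩ := h
  rintro y ⟨u, rfl⟩
  set A := ContinuousLinearMap.adjoint g with hA
  set B := ContinuousLinearMap.adjoint f with hB
  -- ψ x = ⟪u, B x⟫
  set ψ : G →L[ℝ] ℝ := (innerSL ℝ u).comp B with hψ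
  have hker : LinearMap.ker A.toLinearMap ≤ LinearMap.ker ψ.toLinearMap := by
    intro x hx
    have hx0 : A x = 0 := hx
    have : ‖B x‖ ≤ c * ‖A x‖ := hle x
    rw [hx0, norm_zero, mul_zero] at this
    have hB0 : B x = 0 := norm_le_zero_iff.mp this
    show ψ x = 0
    simp [hψ, hB0]
  set S := LinearMap.range A.toLinearMap with hS
  set e := LinearMap.quotKerEquivRange A.toLinearMap with he
  set φ : S →ₗ[ℝ] ℝ :=
    ((LinearMap.ker A.toLinearMap).liftQ ψ.toLinearMap hker).comp e.symm.toLinearMap with hφ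
  have hφA : ∀ x : G, ∀ hx : A.toLinearMap x ∈ S, φ ⟨A.toLinearMap x, hx⟩ = ψ x := by
    intro x hx
    have h1 : e (Submodule.Quotient.mk x) = ⟨A x, hx⟩ := by
      apply Subtype.ext
      simp [he, LinearMap.quotKerEquivRange]
    have h2 : e.symm ⟨A x, hx⟩ = Submodule.Quotient.mk x := by
      rw [← h1, LinearEquiv.symm_apply_apply]
    simp [hφ, h2]
  have hbound : ∀ s : S, ‖φ s‖ ≤ (c * ‖u‖) * ‖s‖ := by
    rintro ⟨s, hs⟩
    obtain ⟨x, rfl⟩ := hs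
    rw [hφA x ⟨x, rfl⟩]
    
    have h1 : ‖ψ x‖ ≤ ‖u‖ * ‖B x‖ := by
      simp only [hψ, ContinuousLinearMap.comp_apply, innerSL_apply_apply]
      exact (abs_real_inner_le_norm u (B x))
    have h2 : ‖B x‖ ≤ c * ‖A x‖ := hle x
    calc ‖ψ x‖ ≤ ‖u‖ * (c * ‖A x‖) := h1.trans (by
          exact mul_le_mul_of_nonneg_left h2 (norm_nonneg u))
      _ = (c * ‖u‖) * ‖(⟨A x, ⟨x, rfl⟩⟩ : S)‖ := by
          have hn : ‖(⟨A x, ⟨x, rfl⟩⟩ : S)‖ = ‖A x‖ := rfl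
          rw [hn]; ring
  set φc : S →L[ℝ] ℝ := φ.mkContinuous (c * ‖u‖) hbound with hφc
  obtain ⟨Φ, hΦ, -⟩ := exists_extension_norm_eq S φc
  set v := (InnerProductSpace.toDual ℝ F).symm Φ with hv
  have hvw : ∀ w : F, inner ℝ v w = Φ w := fun w => by
    simp [hv]
  refine ⟨v, ?_⟩
  have key : ∀ x : G, inner ℝ (g v) x = (inner ℝ (f u) x : ℝ) := by
    intro x
    have h1 : (inner ℝ (g v) x : ℝ) = inner ℝ v (A x) := by
      rw [hA, ContinuousLinearMap.adjoint_inner_right]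
    have h2 : Φ (A x) = ψ x := by
      have := hΦ ⟨A x, ⟨x, rfl⟩⟩
      rw [this, hφc]
      exact hφA x ⟨x, rfl⟩
    have h3 : (ψ x : ℝ) = inner ℝ (f u) x := by
      simp only [hψ, ContinuousLinearMap.comp_apply, innerSL_apply_apply, hB]
      exact ContinuousLinearMap.adjoint_inner_right f u x
    rw [h1, hvw, h2, h3]
  have : ∀ x : G, inner ℝ (g v - f u) x = (0 : ℝ) := by
    intro x; rw [inner_sub_left, key, sub_self]
  have h0 : g v - f u = 0 := by
    have := this (g v - f u)
    exact inner_self_eq_zero.mp this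
  exact sub_eq_zero.mp h0
end

section
/- Let E, F, G be Hilbert spaces, f : E → G and g : F → G bounded linear operators. If the range of f is contained in the range of g, then there exists c > 0 such that ‖f* x‖ ≤ c·‖g* x‖ for all x ∈ G. -/
/-- Douglas-type lemma (converse direction): if Im f ⊆ Im g then there is c > 0
with ‖f* x‖ ≤ c‖g* x‖ for all x. -/
theorem stmt_1
    {E F G : Type*}
    [NormedAddCommGroup E] [InnerProductSpace ℝ E] [CompleteSpace E]
    [NormedAddCommGroup F] [InnerProductSpace ℝ F] [CompleteSpace F]
    [NormedAddCommGroup G] [InnerProductSpace ℝ G] [CompleteSpace G]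
    (f : E →L[ℝ] G) (g : F →L[ℝ] G)
    (h : Set.range f ⊆ Set.range g) :
    ∃ c > (0 : ℝ), ∀ x : G,
      ‖ContinuousLinearMap.adjoint f x‖ ≤ c * ‖ContinuousLinearMap.adjoint g x‖ := by
  classical
  set K : Submodule ℝ F := LinearMap.ker (g : F →ₗ[ℝ] G) with hK
  haveI : CompleteSpace K := (ContinuousLinearMap.isClosed_ker g).completeSpace_coe
  -- choose preimages
  have hchoice : ∀ e : E, ∃ y : F, g y = f e := by
    intro e
    obtain ⟨y, hy⟩ := h (Set.mem_range_self e)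
    exact ⟨y, hy⟩
  choose φ hφ using hchoice
  -- projection onto Kᗮ depends only on g-image
  have hproj_eq : ∀ y y' : F, g y = g y' →
      (Submodule.orthogonalProjectionOnto Kᗮ y : F) = (Submodule.orthogonalProjectionOnto Kᗮ y' : F) := by
    intro y y' hyy
    have hmem : y - y' ∈ Kᗮᗮ := K.le_orthogonal_orthogonal (by
      simp [hK, LinearMap.mem_ker, map_sub, hyy])
    have h0 : Submodule.orthogonalProjectionOnto Kᗮ (y - y') = 0 :=
      Submodule.orthogonalProjectionOnto_apply_of_mem_orthogonal hmem
    have h1 := congrArg (Subtype.val) h0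
    rw [map_sub] at h1
    exact sub_eq_zero.mp (by simpa using h1)
  -- g of the projection equals g of the vector
  have hg_proj : ∀ y : F, g ((Submodule.orthogonalProjectionOnto Kᗮ y : F)) = g y := by
    intro y
    have hdecomp : (Submodule.orthogonalProjectionOnto K y : F) + (Submodule.orthogonalProjectionOnto Kᗮ y : F) = y :=
      K.starProjection_add_starProjection_orthogonal y
    have hker : g ((Submodule.orthogonalProjectionOnto K y : F)) = 0 :=
      (Submodule.orthogonalProjectionOnto K y).2
    calc g ((Submodule.orthogonalProjectionOnto Kᗮ y : F))
        = g ((Submodule.orthogonalProjectionOnto K y : F) + (Submodule.orthogonalProjectionOnto Kᗮ y : F)) := by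
          rw [map_add, hker, zero_add]
      _ = g y := by rw [hdecomp]
  -- the factorizing linear map
  let T : E →ₗ[ℝ] F :=
    { toFun := fun e => (Submodule.orthogonalProjectionOnto Kᗮ (φ e) : F)
      map_add' := by
        intro a b
        show (Submodule.orthogonalProjectionOnto Kᗮ (φ (a+b)) : F) = _
        have : g (φ (a + b)) = g (φ a + φ b) := by
          rw [map_add, hφ, hφ, hφ, map_add]
        rw [hproj_eq _ _ this, map_add, Submodule.coe_add]
      map_smul' := by
        intro c a
        show (Submodule.orthogonalProjectionOnto Kᗮ (φ (c • a)) : F) = _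
        have : g (φ (c • a)) = g (c • φ a) := by
          rw [map_smul, hφ, hφ, map_smul]
        rw [hproj_eq _ _ this, map_smul, Submodule.coe_smul]
        rfl }
  have hTmem : ∀ e, T e ∈ Kᗮ := fun e => (Submodule.orthogonalProjectionOnto Kᗮ (φ e)).2
  have hgT : ∀ e, g (T e) = f e := fun e => by
    show g ((Submodule.orthogonalProjectionOnto Kᗮ (φ e) : F)) = f e
    rw [hg_proj, hφ]
  -- uniqueness: any element of Kᗮ mapping to f e equals T e
  have huniq : ∀ (e : E) (y : F), y ∈ Kᗮ → g y = f e → y = T e := by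
    intro e y hy hgy
    have hsubK : y - T e ∈ K := by
      simp [hK, LinearMap.mem_ker, map_sub, hgy, hgT e]
    have hsubKo : y - T e ∈ Kᗮ := Submodule.sub_mem _ hy (hTmem e)
    have : y - T e = 0 := by
      have := Submodule.inner_left_of_mem_orthogonal hsubK hsubKo
      simpa [inner_self_eq_zero] using this
    exact sub_eq_zero.mp this
  -- closed graph ⇒ T continuous
  have hTcont : Continuous T := by
    apply LinearMap.continuous_of_seq_closed_graph
    intro u x y hux hTy
    refine huniq x y ?_ ?_
    · exact K.isClosed_orthogonal.mem_of_tendsto hTy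
        (Filter.Eventually.of_forall fun n => hTmem (u n))
    · have h1 : Filter.Tendsto (fun n => g (T (u n))) Filter.atTop (nhds (g y)) :=
        (g.continuous.tendsto y).comp hTy
      have h2 : Filter.Tendsto (fun n => f (u n)) Filter.atTop (nhds (f x)) :=
        (f.continuous.tendsto x).comp hux
      have : (fun n => g (T (u n))) = fun n => f (u n) := funext fun n => hgT (u n)
      rw [this] at h1
      exact tendsto_nhds_unique h1 h2
  let Tc : E →L[ℝ] F := ⟨T, hTcont⟩
  have hfact : f = g.comp Tc := by
    ext e
    exact (hgT e).symm
  refine ⟨‖(ContinuousLinearMap.adjoint Tc)‖ + 1, by positivity, fun x => ?_⟩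
  have hadj : ContinuousLinearMap.adjoint f =
      (ContinuousLinearMap.adjoint Tc).comp (ContinuousLinearMap.adjoint g) := by
    rw [hfact, ContinuousLinearMap.adjoint_comp]
  rw [hadj]
  calc ‖(ContinuousLinearMap.adjoint Tc) ((ContinuousLinearMap.adjoint g) x)‖
      ≤ ‖(ContinuousLinearMap.adjoint Tc)‖ * ‖(ContinuousLinearMap.adjoint g) x‖ :=
        (ContinuousLinearMap.adjoint Tc).le_opNorm _
    _ ≤ (‖(ContinuousLinearMap.adjoint Tc)‖ + 1) * ‖(ContinuousLinearMap.adjoint g) x‖ := by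
        apply mul_le_mul_of_nonneg_right (by linarith) (norm_nonneg _)
end
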